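/- In the Gaudin realization, the generating function of integrals of motion admits the pole expansion t(λ) = Σ_{a=1}^{N} ( c₂(a)/(λ − z_a)² + 2 H^{(a)}/(λ − z_a) ) for every λ ∈ ℂ ∖ {z₁,…,z_N}, where c₂(a) = h_a² − h_a + 4X⁺_a X⁻_a + 2v⁺_a v⁻_a is the local Casimir operator at site a and H^{(a)} are the Gaudin Hamiltonians. -/
import Mathlib


/-- osp(1|2) Gaudin model data: sites, inhomogeneity parameters, and local
osp(1|2) operators with super-commutation relations across sites. -/
structure OspGaudinData (N : ℕ) (H : Type*) [AddCommGroup H] [Module ℂ H] where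
  z : Fin N → ℂ
  z_inj : Function.Injective z
  h : Fin N → Module.End ℂ H
  Xp : Fin N → Module.End ℂ H
  Xm : Fin N → Module.End ℂ H
  vp : Fin N → Module.End ℂ H
  vm : Fin N → Module.End ℂ H
  rel_hXp : ∀ a, h a * Xp a - Xp a * h a = (2:ℂ) • Xp a
  rel_hXm : ∀ a, h a * Xm a - Xm a * h a = (-2:ℂ) • Xm a
  rel_XpXm : ∀ a, Xp a * Xm a - Xm a * Xp a = h a
  rel_hvp : ∀ a, h a * vp a - vp a * h a = vp a
  rel_hvm : ∀ a, h a * vm a - vm a * h a = -vm a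
  rel_vpvm : ∀ a, vp a * vm a + vm a * vp a = -h a
  rel_Xmvp : ∀ a, Xm a * vp a - vp a * Xm a = vm a
  rel_Xpvm : ∀ a, Xp a * vm a - vm a * Xp a = vp a
  rel_vpvp : ∀ a, vp a * vp a = Xp a
  rel_vmvm : ∀ a, vm a * vm a = -Xm a
  rel_Xpvp : ∀ a, Xp a * vp a = vp a * Xp a
  rel_Xmvm : ∀ a, Xm a * vm a = vm a * Xm a
  even_comm : ∀ a b, a ≠ b → ∀ Y ∈ ({h a, Xp a, Xm a} : Set (Module.End ℂ H)),
      ∀ Z ∈ ({h b, Xp b, Xm b, vp b, vm b} : Set (Module.End ℂ H)), Y * Z = Z * Y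
  odd_anticomm : ∀ a b, a ≠ b → ∀ Y ∈ ({vp a, vm a} : Set (Module.End ℂ H)),
      ∀ Z ∈ ({vp b, vm b} : Set (Module.End ℂ H)), Y * Z + Z * Y = 0

namespace OspGaudinData

variable {N : ℕ} {H : Type*} [AddCommGroup H] [Module ℂ H]

/-- The Gaudin realization h(λ). -/
noncomputable def hl (G : OspGaudinData N H) (lam : ℂ) : Module.End ℂ H :=
  ∑ a, ((lam - G.z a)⁻¹) • G.h a

noncomputable def Xpl (G : OspGaudinData N H) (lam : ℂ) : Module.End ℂ H :=
  ∑ a, ((lam - G.z a)⁻¹) • G.Xp a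

noncomputable def Xml (G : OspGaudinData N H) (lam : ℂ) : Module.End ℂ H :=
  ∑ a, ((lam - G.z a)⁻¹) • G.Xm a

noncomputable def vpl (G : OspGaudinData N H) (lam : ℂ) : Module.End ℂ H :=
  ∑ a, ((lam - G.z a)⁻¹) • G.vp a

noncomputable def vml (G : OspGaudinData N H) (lam : ℂ) : Module.End ℂ H :=
  ∑ a, ((lam - G.z a)⁻¹) • G.vm a

/-- h′(λ) = −Σ_a h_a/(λ − z_a)². -/
noncomputable def hl' (G : OspGaudinData N H) (lam : ℂ) : Module.End ℂ H :=
  -∑ a, (((lam - G.z a)^2)⁻¹) • G.h a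

/-- The generating function t(λ) of the integrals of motion. -/
noncomputable def tOp (G : OspGaudinData N H) (lam : ℂ) : Module.End ℂ H :=
  G.hl lam * G.hl lam + G.hl' lam + (4:ℂ) • (G.Xpl lam * G.Xml lam)
    + (2:ℂ) • (G.vpl lam * G.vml lam)

/-- The Gaudin Hamiltonian at site `a`. -/
noncomputable def Gham (G : OspGaudinData N H) (a : Fin N) : Module.End ℂ H :=
  ∑ b ∈ Finset.univ.erase a, ((G.z a - G.z b)⁻¹) •
    (G.h a * G.h b + (2:ℂ) • (G.Xp a * G.Xm b + G.Xm a * G.Xp b)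
      + (G.vp a * G.vm b - G.vm a * G.vp b))

end OspGaudinData

open Finset in
/-- pole expansion of t(λ), with the local Casimir operators as
coefficients of the second-order poles and the Gaudin Hamiltonians as
coefficients of the first-order poles. -/
theorem tOp_pole_expansion {N : ℕ} {H : Type*} [AddCommGroup H] [Module ℂ H]
    (hN : 1 ≤ N) (G : OspGaudinData N H) (lam : ℂ) (hlam : ∀ a, lam ≠ G.z a) :
    G.tOp lam = ∑ a,
      ((((lam - G.z a)^2)⁻¹) •
          (G.h a * G.h a - G.h a + (4:ℂ) • (G.Xp a * G.Xm a)
            + (2:ℂ) • (G.vp a * G.vm a))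
        + (2 * (lam - G.z a)⁻¹) • G.Gham a) := by
  classical
  have hfne : ∀ a : Fin N, lam - G.z a ≠ 0 := fun a => sub_ne_zero.mpr (hlam a)
  set f : Fin N → ℂ := fun a => (lam - G.z a)⁻¹ with hf
  set w : Fin N → Fin N → ℂ := fun a b => (G.z a - G.z b)⁻¹ with hw
  set T : Fin N → Fin N → Module.End ℂ H := fun a b =>
    G.h a * G.h b + (4:ℂ) • (G.Xp a * G.Xm b) + (2:ℂ) • (G.vp a * G.vm b) with hT
  -- product of two Gaudin sums
  have hmulsum : ∀ (A B : Fin N → Module.End ℂ H),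
      (∑ a, f a • A a) * (∑ b, f b • B b) = ∑ a, ∑ b, (f a * f b) • (A a * B b) := by
    intro A B
    rw [Finset.sum_mul_sum]
    exact Finset.sum_congr rfl fun a _ => Finset.sum_congr rfl fun b _ =>
      smul_mul_smul_comm (f a) (A a) (f b) (B b)
  have expandT : ∑ a, ∑ b, (f a * f b) • T a b
      = (∑ a, ∑ b, (f a * f b) • (G.h a * G.h b))
        + (4:ℂ) • (∑ a, ∑ b, (f a * f b) • (G.Xp a * G.Xm b))
        + (2:ℂ) • (∑ a, ∑ b, (f a * f b) • (G.vp a * G.vm b)) := by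
    simp only [Finset.smul_sum, ← Finset.sum_add_distrib]
    refine Finset.sum_congr rfl fun a _ => Finset.sum_congr rfl fun b _ => ?_
    simp only [hT]
    module
  have step1 : G.tOp lam = (∑ a, ∑ b, (f a * f b) • T a b) + G.hl' lam := by
    rw [OspGaudinData.tOp, OspGaudinData.hl, OspGaudinData.Xpl, OspGaudinData.Xml,
      OspGaudinData.vpl, OspGaudinData.vml, hmulsum, hmulsum, hmulsum, expandT]
    abel
  -- split diagonal
  have split : ∀ F : Fin N → Fin N → Module.End ℂ H,
      (∑ a, ∑ b, F a b) = (∑ a, F a a) + ∑ a, ∑ b ∈ Finset.univ.erase a, F a b := by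
    intro F
    rw [← Finset.sum_add_distrib]
    exact Finset.sum_congr rfl fun a _ =>
      (Finset.add_sum_erase _ (F a) (Finset.mem_univ a)).symm
  -- diagonal part
  have diag : (∑ a, (f a * f a) • T a a) + G.hl' lam
      = ∑ a, (((lam - G.z a)^2)⁻¹) •
          (G.h a * G.h a - G.h a + (4:ℂ) • (G.Xp a * G.Xm a)
            + (2:ℂ) • (G.vp a * G.vm a)) := by
    rw [OspGaudinData.hl', ← Finset.sum_neg_distrib, ← Finset.sum_add_distrib]
    refine Finset.sum_congr rfl fun a _ => ?_
    have hsq : f a * f a = ((lam - G.z a)^2)⁻¹ := by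
      rw [sq, mul_inv]
    rw [hsq, hT]
    module
  -- swap lemma for off-diagonal double sums
  have swap : ∀ F : Fin N → Fin N → Module.End ℂ H,
      (∑ a, ∑ b ∈ Finset.univ.erase a, F a b)
        = ∑ a, ∑ b ∈ Finset.univ.erase a, F b a := by
    intro F
    exact Finset.sum_comm' (by intro x y; simp [ne_comm, eq_comm, and_comm])
  -- partial fractions
  have pf : ∀ a b : Fin N, a ≠ b → f a * f b = w a b * f a - w a b * f b := by
    intro a b hab
    have hz : G.z a - G.z b ≠ 0 := sub_ne_zero.mpr fun e => hab (G.z_inj e)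
    have e1 : w a b * f a - w a b * f b = w a b * (f a - f b) := by ring
    rw [e1]
    show f a * f b = w a b * ((lam - G.z a)⁻¹ - (lam - G.z b)⁻¹)
    rw [inv_sub_inv (hfne a) (hfne b)]
    have e2 : lam - G.z b - (lam - G.z a) = G.z a - G.z b := by ring
    rw [e2, div_eq_mul_inv, ← mul_assoc]
    show f a * f b = (G.z a - G.z b)⁻¹ * (G.z a - G.z b) * ((lam - G.z a) * (lam - G.z b))⁻¹
    rw [inv_mul_cancel₀ hz, one_mul, mul_inv]
  -- cross-site symmetrization
  have cross : ∀ a b : Fin N, a ≠ b → T a b + T b a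
      = (2:ℂ) • (G.h a * G.h b + (2:ℂ) • (G.Xp a * G.Xm b + G.Xm a * G.Xp b)
          + (G.vp a * G.vm b - G.vm a * G.vp b)) := by
    intro a b hab
    have hba : b ≠ a := hab.symm
    have e1 : G.h b * G.h a = G.h a * G.h b :=
      G.even_comm b a hba _ (by simp) _ (by simp)
    have e2 : G.Xp b * G.Xm a = G.Xm a * G.Xp b :=
      G.even_comm b a hba _ (by simp) _ (by simp)
    have e3 : G.vp b * G.vm a + G.vm a * G.vp b = 0 :=
      G.odd_anticomm b a hba _ (by simp) _ (by simp)
    have e3' : G.vp b * G.vm a = -(G.vm a * G.vp b) := by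
      linear_combination (norm := module) e3
    rw [hT]
    simp only [e1, e2, e3']
    module
  -- off-diagonal part
  have offdiag : (∑ a, ∑ b ∈ Finset.univ.erase a, (f a * f b) • T a b)
      = ∑ a, (2 * f a) • G.Gham a := by
    have h1 : (∑ a, ∑ b ∈ Finset.univ.erase a, (f a * f b) • T a b)
        = (∑ a, ∑ b ∈ Finset.univ.erase a, (w a b * f a) • T a b)
          - ∑ a, ∑ b ∈ Finset.univ.erase a, (w a b * f b) • T a b := by
      rw [← Finset.sum_sub_distrib]
      refine Finset.sum_congr rfl fun a _ => ?_
      rw [← Finset.sum_sub_distrib]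
      refine Finset.sum_congr rfl fun b hb => ?_
      have hab : a ≠ b := fun e => (Finset.mem_erase.mp hb).1 e.symm
      rw [pf a b hab, sub_smul]
    have h2 : (∑ a, ∑ b ∈ Finset.univ.erase a, (w a b * f b) • T a b)
        = ∑ a, ∑ b ∈ Finset.univ.erase a, (-(w a b * f a)) • T b a := by
      rw [swap (fun a b => (w a b * f b) • T a b)]
      refine Finset.sum_congr rfl fun a _ => Finset.sum_congr rfl fun b hb => ?_
      have hwab : w b a = -w a b := by
        simp only [hw, ← neg_sub (G.z a) (G.z b), inv_neg]
      rw [hwab, neg_mul]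
    rw [h1, h2, ← Finset.sum_sub_distrib]
    refine Finset.sum_congr rfl fun a _ => ?_
    rw [← Finset.sum_sub_distrib, OspGaudinData.Gham, Finset.smul_sum]
    refine Finset.sum_congr rfl fun b hb => ?_
    have hab : a ≠ b := fun e => (Finset.mem_erase.mp hb).1 e.symm
    have key : (w a b * f a) • T a b - (-(w a b * f a)) • T b a
        = (w a b * f a) • (T a b + T b a) := by module
    rw [key, cross a b hab]
    show (w a b * f a) • ((2:ℂ) • _) = (2 * f a) • ((G.z a - G.z b)⁻¹ • _)
    rw [smul_smul, smul_smul, hw]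
    ring_nf
  -- assemble
  rw [step1, split, add_right_comm, diag, offdiag, ← Finset.sum_add_distrib]
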